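/- arXiv:math/9810075 — 9 statements merged into one kernel-verified Lean document; each statement's English description precedes it below -/
import Mathlib

section
/- Let 𝓘 be an ideal on a set X, let τ be the topology on X whose closed sets are exactly the members of 𝓘 ∪ {X}, and let 𝓙 be another ideal on X such that (X, τ) is a T_𝓙-space. Then every set F ∈ 𝓙 ∖ 𝓘 is an intersection of open sets of (X, τ). -/
open Topology

def IsIdealOn {X : Type*} (I : Set (Set X)) : Prop :=
  I.Nonempty ∧ (∀ A B : Set X, A ∈ I → B ⊆ A → B ∈ I) ∧
    (∀ A B : Set X, A ∈ I → B ∈ I → A ∪ B ∈ I)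

def IsTISpaceT {X : Type*} (t : TopologicalSpace X) (I : Set (Set X)) : Prop :=
  ∀ s ∈ I, ∀ x ∉ s, ∃ A : Set X, x ∈ A ∧ A ∩ s = ∅ ∧ (IsOpen[t] A ∨ IsClosed[t] A)

/-- If `t` is the topology whose closed sets are exactly `I ∪ {univ}` and `(X, t)` is a
`T_J`-space, then every `F ∈ J \ I` is an intersection of `t`-open sets. -/
theorem stmt_4 {X : Type*} (I J : Set (Set X)) (hI : IsIdealOn I) (hJ : IsIdealOn J)
    (t : TopologicalSpace X)
    (ht : ∀ s : Set X, IsClosed[t] s ↔ (s ∈ I ∨ s = Set.univ))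
    (hT : IsTISpaceT t J) :
    ∀ F ∈ J, F ∉ I →
      ∃ 𝒰 : Set (Set X), (∀ U ∈ 𝒰, IsOpen[t] U) ∧ F = ⋂₀ 𝒰 := by
  intro F hFJ hFI
  obtain ⟨⟨S, hS⟩, hdown, _⟩ := hI
  have hempty : (∅ : Set X) ∈ I := hdown S ∅ hS (Set.empty_subset S)
  refine ⟨{U | IsOpen[t] U ∧ F ⊆ U}, fun U hU => hU.1, ?_⟩
  apply Set.Subset.antisymm
  · exact fun x hx U hU => hU.2 hx
  · intro x hx
    by_contra hxF
    obtain ⟨A, hxA, hdisj, hAoc⟩ := hT F hFJ x hxF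
    have hFAc : F ⊆ Aᶜ := fun y hy hyA => Set.eq_empty_iff_forall_notMem.mp hdisj y ⟨hyA, hy⟩
    rcases hAoc with hAo | hAc
    · -- A open: Aᶜ closed, Aᶜ ≠ univ (x ∈ A), so Aᶜ ∈ I, F ∈ I, contradiction
      have hAcc : IsClosed[t] Aᶜ := isClosed_compl_iff.mpr hAo
      rcases (ht Aᶜ).mp hAcc with h | h
      · exact hFI (hdown Aᶜ F h hFAc)
      · exact (Set.eq_univ_iff_forall.mp h x) hxA
    · rcases (ht A).mp hAc with h | h
      · -- A ∈ I, so Aᶜ is open, contains F, misses x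
        have : x ∈ Aᶜ := hx Aᶜ ⟨by
          rw [isOpen_compl_iff, ht]; exact Or.inl h, hFAc⟩
        exact this hxA
      · -- A = univ forces F = ∅ ∈ I
        subst h
        have : F = ∅ := by
          ext y; simp only [Set.mem_empty_iff_false, iff_false]
          intro hy; exact Set.eq_empty_iff_forall_notMem.mp hdisj y ⟨trivial, hy⟩
        exact hFI (this ▸ hempty)
end

section
/- Let X be a semi-Alexandroff topological space and 𝓘 an ideal on X such that X is a T_𝓘-space and 𝓘 is a τ-boundary (i.e., the only open set belonging to 𝓘 is ∅). Then 𝓘 is completely codense, i.e., the only preopen set belonging to 𝓘 is ∅. -/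
def IsTISpace {X : Type*} [TopologicalSpace X] (I : Set (Set X)) : Prop :=
  ∀ s ∈ I, ∀ x ∉ s, ∃ A : Set X, x ∈ A ∧ A ∩ s = ∅ ∧ (IsOpen A ∨ IsClosed A)

/-- If `X` is semi-Alexandroff (every intersection of open sets is semi-open), `X` is a
`T_I`-space, and `I` is a `τ`-boundary, then `I` is completely codense: the only preopen
member of `I` is `∅`. -/
theorem stmt_5 {X : Type*} [TopologicalSpace X] (I : Set (Set X)) (hI : IsIdealOn I)
    (hsa : ∀ 𝒰 : Set (Set X), (∀ U ∈ 𝒰, IsOpen U) → ⋂₀ 𝒰 ⊆ closure (interior (⋂₀ 𝒰)))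
    (hT : IsTISpace I)
    (hb : ∀ U ∈ I, IsOpen U → U = ∅) :
    ∀ A ∈ I, A ⊆ interior (closure A) → A = ∅ := by
  intro A hA hpre
  set G := interior (closure A) with hG
  have hintA : interior A = ∅ :=
    hb _ (hI.2.1 A _ hA interior_subset) isOpen_interior
  have key : ∀ x ∈ G \ A, ∃ C : Set X, x ∈ C ∧ C ∩ A = ∅ ∧ IsClosed C := by
    intro x hx
    obtain ⟨B, hxB, hBA, hcase⟩ := hT A hA x hx.2
    rcases hcase with ho | hc
    · exfalso
      have hxG : x ∈ closure A := interior_subset hx.1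
      have hne : (B ∩ A).Nonempty := by
        obtain ⟨y, hyB, hyA⟩ := mem_closure_iff.mp hxG B ho hxB
        exact ⟨y, hyB, hyA⟩
      rw [hBA] at hne
      exact Set.not_nonempty_empty hne
    · exact ⟨B, hxB, hBA, hc⟩
  choose C hxC hCA hCc using key
  set 𝒰 : Set (Set X) := insert G {s | ∃ x, ∃ h : x ∈ G \ A, s = (C x h)ᶜ} with h𝒰
  have hopen : ∀ U ∈ 𝒰, IsOpen U := by
    rintro U (rfl | ⟨x, h, rfl⟩)
    · exact isOpen_interior
    · exact (hCc x h).isOpen_compl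
  have hinter : ⋂₀ 𝒰 = A := by
    apply Set.Subset.antisymm
    · intro y hy
      have hyG : y ∈ G := hy G (Set.mem_insert _ _)
      by_contra hyA
      have hmem : y ∈ (C y ⟨hyG, hyA⟩)ᶜ :=
        hy _ (Set.mem_insert_of_mem _ ⟨y, ⟨hyG, hyA⟩, rfl⟩)
      exact hmem (hxC y ⟨hyG, hyA⟩)
    · intro a ha
      rintro U (rfl | ⟨x, h, rfl⟩)
      · exact hpre ha
      · intro haC
        have : a ∈ C x h ∩ A := ⟨haC, ha⟩
        rw [hCA] at this
        exact this
  have := hsa 𝒰 hopen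
  rw [hinter, hintA, closure_empty] at this
  exact Set.subset_empty_iff.mp this
end

section
/- Let X be a semi-Alexandroff topological space and 𝓘 an ideal on X such that X is a T_𝓘-space and 𝓘 is a τ-boundary. If X is resolvable (X is nonempty and is the union of two disjoint dense subsets), then X is 𝓘-resolvable (X is the union of two disjoint 𝓘-dense subsets). -/
/-- The local function `A*(I)` of `A` with respect to the ideal `I`. -/
def localFn {X : Type*} [TopologicalSpace X] (I : Set (Set X)) (A : Set X) : Set X :=
  {x : X | ∀ U : Set X, IsOpen U → x ∈ U → U ∩ A ∉ I}

/-- If `X` is a semi-Alexandroff `T_I`-space and `I` is a `τ`-boundary, then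
resolvability of `X` implies `I`-resolvability of `X`. -/
theorem stmt_6 {X : Type*} [TopologicalSpace X] (I : Set (Set X)) (hI : IsIdealOn I)
    (hsa : ∀ 𝒰 : Set (Set X), (∀ U ∈ 𝒰, IsOpen U) → ⋂₀ 𝒰 ⊆ closure (interior (⋂₀ 𝒰)))
    (hT : IsTISpace I)
    (hb : ∀ U ∈ I, IsOpen U → U = ∅)
    (hres : Nonempty X ∧ ∃ D₁ D₂ : Set X,
      Dense D₁ ∧ Dense D₂ ∧ Disjoint D₁ D₂ ∧ D₁ ∪ D₂ = Set.univ) :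
    ∃ D₁ D₂ : Set X,
      localFn I D₁ = Set.univ ∧ localFn I D₂ = Set.univ ∧
        Disjoint D₁ D₂ ∧ D₁ ∪ D₂ = Set.univ := by
  obtain ⟨hne, D₁, D₂, hD₁, hD₂, hdisj, huniv⟩ := hres
  have key : ∀ D : Set X, Dense D → localFn I D = Set.univ := by
    intro D hD
    ext x
    simp only [Set.mem_univ, iff_true, localFn, Set.mem_setOf_eq]
    intro U hU hxU hSI
    set S := U ∩ D with hS
    set 𝒰 : Set (Set X) := {G : Set X | IsOpen G ∧ S ⊆ G} with h𝒰
    set W := ⋂₀ 𝒰 with hW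
    have hSW : S ⊆ W := fun y hy => Set.mem_sInter.2 fun G hG => hG.2 hy
    -- W ∩ closure S ⊆ S, by the T_I property
    have hWcl : W ∩ closure S ⊆ S := by
      rintro y ⟨hyW, hycl⟩
      by_contra hyS
      obtain ⟨A, hyA, hAS, hA⟩ := hT S hSI y hyS
      rcases hA with hAo | hAc
      · obtain ⟨z, hz⟩ := mem_closure_iff.1 hycl A hAo hyA
        exact absurd (hAS ▸ hz : z ∈ (∅ : Set X)) (Set.notMem_empty z)
      · have hGS : S ⊆ Aᶜ := fun z hz hzA =>
          (Set.eq_empty_iff_forall_notMem.1 hAS z) ⟨hzA, hz⟩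
        exact (Set.mem_sInter.1 hyW Aᶜ ⟨hAc.isOpen_compl, hGS⟩) hyA
    -- U ⊆ closure S since D is dense and U is open
    have hUcl : U ⊆ closure S := by
      intro y hy
      rw [mem_closure_iff]
      intro V hV hyV
      obtain ⟨z, hzV, hzD⟩ := hD.inter_open_nonempty (V ∩ U) (hV.inter hU) ⟨y, hyV, hy⟩
      exact ⟨z, hzV.1, hzV.2, hzD⟩
    -- semi-Alexandroff: W ⊆ closure (interior W)
    have hsemi : W ⊆ closure (interior W) := hsa 𝒰 fun G hG => hG.1
    -- S is nonempty
    have hScl : x ∈ closure S := hUcl hxU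
    -- x ∈ closure (interior W)? Need some point of S; x ∈ closure S, S ⊆ W ⊆ cl int W,
    -- so x ∈ closure (closure (interior W)) = closure (interior W)
    have hxW : x ∈ closure (interior W) := by
      have : closure S ⊆ closure (interior W) := by
        calc closure S ⊆ closure W := closure_mono hSW
        _ ⊆ closure (closure (interior W)) := closure_mono hsemi
        _ = closure (interior W) := closure_closure
      exact this hScl
    -- so U ∩ interior W is nonempty
    obtain ⟨z, hzU, hzW⟩ := mem_closure_iff.1 hxW U hU hxU
    -- the nonempty open set O = U ∩ interior W is contained in S
    set O := U ∩ interior W with hO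
    have hOopen : IsOpen O := hU.inter isOpen_interior
    have hOS : O ⊆ S := fun y hy =>
      hWcl ⟨interior_subset hy.2, hUcl hy.1⟩
    have hOI : O ∈ I := hI.2.1 S O hSI hOS
    have : O = ∅ := hb O hOI hOopen
    exact absurd (this ▸ (⟨hzU, hzW⟩ : z ∈ O)) (Set.notMem_empty z)
  exact ⟨D₁, D₂, key D₁ hD₁, key D₂ hD₂, hdisj, huniv⟩
end

section
/- Every T_{1/3} topological space X is a T_𝓗𝓚-space, where 𝓗𝓚 is the ideal of hereditarily compact subsets of X. -/
/-- `X` is a `T_{1/3}`-space. -/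
def IsTThird (X : Type*) [TopologicalSpace X] : Prop :=
  ∀ S : Set X, IsCompact S → ∀ x ∉ S, ∃ A : Set X, S ⊆ A ∧ x ∉ A ∧ (IsOpen A ∨ IsClosed A)

theorem stmt_8 {X : Type*} [TopologicalSpace X] (h : IsTThird X) :
    IsTISpace {s : Set X | ∀ r ⊆ s, IsCompact r} := by
  intro s hs x hx
  obtain ⟨A, hsA, hxA, hoc⟩ := h s (hs s subset_rfl) x hx
  refine ⟨Aᶜ, hxA, ?_, ?_⟩
  · ext y; simp only [Set.mem_inter_iff, Set.mem_compl_iff, Set.mem_empty_iff_false, iff_false]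
    rintro ⟨hyA, hys⟩; exact hyA (hsA hys)
  · rcases hoc with ho | hc
    · exact Or.inr ho.isClosed_compl
    · exact Or.inl hc.isOpen_compl
end

section
/- A topological space X is a T_{1/2}-space if and only if X is a T_𝓟-space, where 𝓟 is the ideal of all subsets of X. -/
def IsTHalf (X : Type*) [TopologicalSpace X] : Prop :=
  ∀ x : X, IsOpen ({x} : Set X) ∨ IsClosed ({x} : Set X)

theorem stmt_9 {X : Type*} [TopologicalSpace X] :
    IsTHalf X ↔ IsTISpace (Set.univ : Set (Set X)) := by
  constructor
  · intro h s _ x hx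
    exact ⟨{x}, rfl, by simp [Set.singleton_inter_eq_empty, hx], h x⟩
  · intro h x
    obtain ⟨A, hxA, hAs, hA⟩ := h ({x}ᶜ) (Set.mem_univ _) x (by simp)
    have : A = {x} := by
      apply Set.eq_singleton_iff_unique_mem.mpr
      refine ⟨hxA, fun y hy => ?_⟩
      by_contra hne
      have : y ∈ A ∩ {x}ᶜ := ⟨hy, hne⟩
      simp [hAs] at this
    rw [this] at hA
    exact hA
end

section
/- Let τ be the topology on ℝ generated by the following sets: all singletons {x} with x ∉ {1, 2}; all cofinite sets U with 2 ∈ U and 1 ∉ U; and all cofinite sets U with {1, 2} ⊆ U. Then (ℝ, τ) is a T_𝓗𝓚-space (where 𝓗𝓚 is the ideal of hereditarily compact subsets) but not a T_{1/3}-space. -/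
open Topology

/-- The ideal of hereditarily compact subsets with respect to the topology `t`. -/
def HKT {X : Type*} (t : TopologicalSpace X) : Set (Set X) :=
  {s : Set X | ∀ r ⊆ s, @IsCompact X t r}

/-- `(X, t)` is a `T_{1/3}`-space (explicit topology). -/
def IsTThirdT {X : Type*} (t : TopologicalSpace X) : Prop :=
  ∀ S : Set X, @IsCompact X t S → ∀ x ∉ S,
    ∃ A : Set X, S ⊆ A ∧ x ∉ A ∧ (IsOpen[t] A ∨ IsClosed[t] A)

/-- The generating family: all singletons `{x}` with `x ∉ {1, 2}`, all cofinite sets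
containing `2` but not `1`, and all cofinite sets containing `{1, 2}`. -/
def genSets : Set (Set ℝ) :=
  {U : Set ℝ | ∃ x : ℝ, x ≠ 1 ∧ x ≠ 2 ∧ U = {x}} ∪
  {U : Set ℝ | Uᶜ.Finite ∧ 2 ∈ U ∧ 1 ∉ U} ∪
  {U : Set ℝ | Uᶜ.Finite ∧ 1 ∈ U ∧ 2 ∈ U}

def τR : TopologicalSpace ℝ := TopologicalSpace.generateFrom genSets

lemma isOpen_tau_iff (U : Set ℝ) :
    IsOpen[τR] U ↔ (((1:ℝ) ∈ U → (2:ℝ) ∈ U) ∧ ((2:ℝ) ∈ U → Uᶜ.Finite)) := by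
  constructor
  · intro h
    induction h with
    | basic V hV =>
      simp only [genSets, Set.mem_union, Set.mem_setOf_eq] at hV
      rcases hV with (⟨x, hx1, hx2, rfl⟩ | ⟨hf, h2, h1⟩) | ⟨hf, h1, h2⟩
      · exact ⟨fun h => absurd h.symm hx1, fun h => absurd h.symm hx2⟩
      · exact ⟨fun h => absurd h h1, fun _ => hf⟩
      · exact ⟨fun _ => h2, fun _ => hf⟩
    | univ => simp
    | inter V W _ _ ihV ihW =>
      refine ⟨fun h => ⟨ihV.1 h.1, ihW.1 h.2⟩, fun h => ?_⟩
      rw [Set.compl_inter]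
      exact (ihV.2 h.1).union (ihW.2 h.2)
    | sUnion S _ ih =>
      constructor
      · rintro ⟨V, hV, h1V⟩
        exact ⟨V, hV, (ih V hV).1 h1V⟩
      · rintro ⟨V, hV, h2V⟩
        exact ((ih V hV).2 h2V).subset (Set.compl_subset_compl.mpr (Set.subset_sUnion_of_mem hV))
  · rintro ⟨h12, h2f⟩
    by_cases h1 : (1:ℝ) ∈ U
    · exact TopologicalSpace.GenerateOpen.basic U (Or.inr ⟨h2f (h12 h1), h1, h12 h1⟩)
    · by_cases h2 : (2:ℝ) ∈ U
      · exact TopologicalSpace.GenerateOpen.basic U (Or.inl (Or.inr ⟨h2f h2, h2, h1⟩))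
      · have hU : U = ⋃ x ∈ U, ({x} : Set ℝ) := by simp
        rw [hU]
        refine @isOpen_biUnion ℝ ℝ τR U _ (fun x hx => ?_)
        refine TopologicalSpace.GenerateOpen.basic _ (Or.inl (Or.inl ⟨x, ?_, ?_, rfl⟩))
        · rintro rfl; exact h1 hx
        · rintro rfl; exact h2 hx

lemma compact_of_one_mem (s : Set ℝ) (h1 : (1:ℝ) ∈ s) : @IsCompact ℝ τR s := by
  letI := τR
  apply isCompact_of_finite_subcover
  intro ι U hU hcov
  classical
  obtain ⟨i0, hi0⟩ := Set.mem_iUnion.mp (hcov h1)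
  have hop := (isOpen_tau_iff (U i0)).mp (hU i0)
  have hfin : (U i0)ᶜ.Finite := hop.2 (hop.1 hi0)
  have hfin2 : (s \ U i0).Finite := hfin.subset (fun x hx => hx.2)
  haveI := hfin2.fintype
  choose f hf using fun x : ↥(s \ U i0) => Set.mem_iUnion.mp (hcov x.2.1)
  refine ⟨insert i0 (Finset.univ.image f), fun x hx => ?_⟩
  by_cases hxU : x ∈ U i0
  · exact Set.mem_biUnion (Finset.mem_insert_self _ _) hxU
  · refine Set.mem_biUnion ?_ (hf ⟨x, hx, hxU⟩)
    exact Finset.mem_insert_of_mem (Finset.mem_image_of_mem f (Finset.mem_univ _))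

lemma hk_finite (s : Set ℝ) (hs : s ∈ HKT τR) : s.Finite := by
  letI := τR
  have hc : IsCompact (s \ {1, 2}) := hs _ Set.diff_subset
  have hcov : s \ {1, 2} ⊆ ⋃ x : ↥(s \ {1, 2}), ({x.1} : Set ℝ) :=
    fun x hx => Set.mem_iUnion.mpr ⟨⟨x, hx⟩, rfl⟩
  have hop : ∀ x : ↥(s \ {1, 2}), IsOpen[τR] ({x.1} : Set ℝ) := by
    intro x
    rw [isOpen_tau_iff]
    have h12 : x.1 ≠ 1 ∧ x.1 ≠ 2 := by
      have := x.2.2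
      simpa using this
    constructor
    · intro h; exact absurd h.symm h12.1
    · intro h; exact absurd h.symm h12.2
  obtain ⟨t, ht⟩ := hc.elim_finite_subcover _ hop hcov
  have hfin : (s \ {1, 2}).Finite :=
    (t.finite_toSet.biUnion (fun i _ => Set.finite_singleton _)).subset ht
  have : s ⊆ (s \ {1, 2}) ∪ {1, 2} := by
    intro x hx
    by_cases h : x ∈ ({1, 2} : Set ℝ)
    · exact Or.inr h
    · exact Or.inl ⟨hx, h⟩
  exact (hfin.union ((Set.finite_singleton _).insert _)).subset this

theorem stmt_11 : IsTISpaceT τR (HKT τR) ∧ ¬ IsTThirdT τR := by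
  letI := τR
  constructor
  · intro s hs x hx
    have hsf : s.Finite := hk_finite s hs
    by_cases hx1 : x = 1
    · subst hx1
      refine ⟨{1}, rfl, ?_, Or.inr ⟨?_⟩⟩
      · ext y; simp only [Set.mem_inter_iff, Set.mem_singleton_iff, Set.mem_empty_iff_false,
          iff_false, not_and]
        rintro rfl; exact hx
      · rw [isOpen_tau_iff]
        refine ⟨fun h => absurd rfl h, fun _ => by simp⟩
    · by_cases hx2 : x = 2
      · subst hx2
        refine ⟨(insert 1 s)ᶜ, ?_, ?_, Or.inl ?_⟩
        · simp only [Set.mem_compl_iff, Set.mem_insert_iff, not_or]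
          exact ⟨by norm_num, hx⟩
        · ext y; simp only [Set.mem_inter_iff, Set.mem_compl_iff, Set.mem_insert_iff,
            Set.mem_empty_iff_false, iff_false, not_and]
          intro h hy; exact h (Or.inr hy)
        · rw [isOpen_tau_iff]
          constructor
          · intro h; exact absurd (Or.inl rfl) h
          · intro _; rw [compl_compl]; exact hsf.insert 1
      · refine ⟨{x}, rfl, ?_, Or.inl ?_⟩
        · ext y; simp only [Set.mem_inter_iff, Set.mem_singleton_iff, Set.mem_empty_iff_false,
            iff_false, not_and]
          rintro rfl; exact hx
        · rw [isOpen_tau_iff]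
          exact ⟨fun h => absurd h.symm hx1, fun h => absurd h.symm hx2⟩
  · intro h
    have hcomp : @IsCompact ℝ τR ({2}ᶜ : Set ℝ) :=
      compact_of_one_mem _ (by norm_num)
    obtain ⟨A, hSA, hxA, hAoc⟩ := h ({2}ᶜ) hcomp 2 (by simp)
    have hA : A = ({2}ᶜ : Set ℝ) := by
      apply le_antisymm
      · intro y hy
        simp only [Set.mem_compl_iff, Set.mem_singleton_iff]
        rintro rfl; exact hxA hy
      · exact hSA
    subst hA
    have h1A : (1:ℝ) ∈ ({2}ᶜ : Set ℝ) := by norm_num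
    rcases hAoc with hop | hcl
    · have := ((isOpen_tau_iff _).mp hop).1 h1A
      simp at this
    · have : IsOpen[τR] (({2}ᶜ : Set ℝ)ᶜ) := hcl.isOpen_compl
      rw [compl_compl] at this
      have h2 := ((isOpen_tau_iff _).mp this).2 rfl
      exact (Set.finite_singleton (2:ℝ)).infinite_compl h2
end

section
/- Let X = ℕ (the non-negative integers) with the topology whose open sets are ∅ together with all sets U ⊆ ℕ such that 0 ∈ U and ℕ ∖ U is finite. Then X is a T_{1/4}-space but not a T_𝓗𝓚-space, where 𝓗𝓚 is the ideal of hereditarily compact subsets of X. -/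
open Topology

/-- `(X, t)` is a `T_{1/4}`-space (explicit topology). -/
def IsTQuarterT {X : Type*} (t : TopologicalSpace X) : Prop :=
  ∀ S : Set X, S.Finite → ∀ x ∉ S,
    ∃ A : Set X, S ⊆ A ∧ x ∉ A ∧ (IsOpen[t] A ∨ IsClosed[t] A)

/-- `ℕ` with the topology whose open sets are `∅` and the cofinite sets containing `0`
is a `T_{1/4}`-space but not a `T_HK`-space. -/
theorem stmt_12 (t : TopologicalSpace ℕ)
    (ht : ∀ U : Set ℕ, IsOpen[t] U ↔ (U = ∅ ∨ (0 ∈ U ∧ Uᶜ.Finite))) :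
    IsTQuarterT t ∧ ¬ IsTISpaceT t (HKT t) := by
  constructor
  · intro S hS x hx
    by_cases hx0 : x = 0
    · refine ⟨S, subset_rfl, hx, Or.inr ?_⟩
      rw [← @isOpen_compl_iff ℕ S t, ht]
      refine Or.inr ⟨?_, by simpa using hS⟩
      simpa [hx0] using hx
    · refine ⟨{x}ᶜ, fun y hy => ?_, by simp, Or.inl ?_⟩
      · simp only [Set.mem_compl_iff, Set.mem_singleton_iff]
        rintro rfl; exact hx hy
      · rw [ht]
        exact Or.inr ⟨by simpa using (Ne.symm hx0), by simp⟩
  · -- every subset is compact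
    have key : ∀ r : Set ℕ, @IsCompact ℕ t r := by
      intro r
      refine @isCompact_of_finite_subcover ℕ t r ?_
      intro ι U hU hcov
      classical
      rcases r.eq_empty_or_nonempty with hr | ⟨x, hxr⟩
      · exact ⟨∅, by simp [hr]⟩
      · obtain ⟨i0, hi0⟩ := Set.mem_iUnion.1 (hcov hxr)
        rcases (ht (U i0)).1 (hU i0) with h | ⟨_, hfin⟩
        · rw [h] at hi0; exact absurd hi0 (Set.notMem_empty x)
        · have hfin' : ((U i0)ᶜ ∩ r).Finite := hfin.inter_of_left r
          have hch : ∀ y ∈ (U i0)ᶜ ∩ r, ∃ i, y ∈ U i := fun y hy =>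
            Set.mem_iUnion.1 (hcov hy.2)
          choose f hf using hch
          refine ⟨insert i0 (hfin'.toFinset.attach.image
            (fun y => f y.1 (hfin'.mem_toFinset.1 y.2))), fun z hz => ?_⟩
          by_cases hzU : z ∈ U i0
          · exact Set.mem_iUnion₂.2 ⟨i0, Finset.mem_insert_self _ _, hzU⟩
          · have hmem : z ∈ (U i0)ᶜ ∩ r := ⟨hzU, hz⟩
            refine Set.mem_iUnion₂.2 ⟨f z hmem, ?_, hf z hmem⟩
            refine Finset.mem_insert_of_mem (Finset.mem_image.2
              ⟨⟨z, hfin'.mem_toFinset.2 hmem⟩, Finset.mem_attach _ _, rfl⟩)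
    intro h
    obtain ⟨A, h0A, hAdisj, hA⟩ := h {0}ᶜ (fun r _ => key r) 0 (by simp)
    have hA0 : A = {0} := by
      apply Set.eq_singleton_iff_unique_mem.2 ⟨h0A, fun y hy => ?_⟩
      by_contra hy0
      have : y ∈ A ∩ {0}ᶜ := ⟨hy, by simpa using hy0⟩
      rw [hAdisj] at this
      exact this
    subst hA0
    rcases hA with hAo | hAc
    · rcases (ht _).1 hAo with h | ⟨_, hfin⟩
      · exact (Set.singleton_ne_empty 0) h
      · have : ({0}ᶜ : Set ℕ).Infinite := Set.Finite.infinite_compl (Set.finite_singleton 0)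
        exact this hfin
    · rcases (ht _).1 hAc.isOpen_compl with h | ⟨h0, _⟩
      · have : (1 : ℕ) ∈ ({0}ᶜ : Set ℕ) := by simp
        rw [h] at this; exact this
      · exact h0 rfl
end

section
/- Let X be a topological space with an ideal 𝓘 such that X is a T_𝓘-space, and let A ⊆ X be endowed with the subspace topology and the ideal 𝓘_A = {I ∩ A : I ∈ 𝓘}. Then A is a T_{𝓘_A}-space. -/
/-- Every subspace `A` of a `T_I`-space is a `T_{I_A}`-space, where
`I_A = {i ∩ A : i ∈ I}` is the trace ideal on `A`. -/
theorem stmt_14 {X : Type*} [TopologicalSpace X] (I : Set (Set X)) (hI : IsIdealOn I)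
    (hT : IsTISpace I) (A : Set X) :
    IsTISpace {s : Set A | ∃ i ∈ I, s = Subtype.val ⁻¹' i} := by
  rintro s ⟨i, hi, rfl⟩ x hx
  obtain ⟨B, hxB, hBi, hB⟩ := hT i hi x.val hx
  refine ⟨Subtype.val ⁻¹' B, hxB, ?_, ?_⟩
  · ext y; simp only [Set.mem_inter_iff, Set.mem_preimage, Set.mem_empty_iff_false, iff_false]
    rintro ⟨hy1, hy2⟩
    exact (Set.eq_empty_iff_forall_notMem.mp hBi) y.val ⟨hy1, hy2⟩
  · rcases hB with h | h
    · exact Or.inl (h.preimage continuous_subtype_val)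
    · exact Or.inr (h.preimage continuous_subtype_val)
end

section
/- Let τ* and τ be topologies on a set X with τ* ⊆ τ. If (X, τ*) is a T_{𝓗𝓚_{τ*}}-space, then (X, τ) is a T_{𝓗𝓚_τ}-space. That is, every topology finer than a T_𝓗𝓚-topology is a T_𝓗𝓚-topology. -/
open Topology

/-- Every topology finer than a `T_HK`-topology is a `T_HK`-topology. -/
theorem stmt_16 {X : Type*} (t' t : TopologicalSpace X)
    (h : ∀ U : Set X, IsOpen[t'] U → IsOpen[t] U)
    (hT : IsTISpaceT t' (HKT t')) : IsTISpaceT t (HKT t) := by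
  have hle : t ≤ t' := fun U hU => h U hU
  intro s hs x hx
  have hs' : s ∈ HKT t' := by
    intro r hr
    have hc : @IsCompact X t r := hs r hr
    have hcont : @Continuous X X t t' id := continuous_id_iff_le.mpr hle
    simpa using @IsCompact.image X X t t' r id hc hcont
  obtain ⟨A, hxA, hAs, hA⟩ := hT s hs' x hx
  refine ⟨A, hxA, hAs, ?_⟩
  rcases hA with hA | hA
  · exact Or.inl (h A hA)
  · right
    constructor
    exact h _ hA.isOpen_compl
end
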